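/- Suppose b_{ik} > 0 for all i, k and ω_k > 0, a_k > 0 for all k. Let (p, e) belong to the feasible set F of problem (P1), and let μ be dual-feasible, i.e. μ_i ≥ 0 for all i, μ_i > 0 for at least one i, and β_{ij} μ_j ≤ μ_i for all i ≠ j. Then the weighted sum-rate is bounded by the dual value: R(p) ≤ ∑_k (ω_k log₂(1 + a_k p_k(μ)) − (∑_i b_{ik} μ_i) p_k(μ)) + ∑_i μ_i E_i, where p_k(μ) = max(ω_k/(ln 2 · ∑_i b_{ik} μ_i) − 1/a_k, 0). (Weak duality for problem (P1).) -/

import Mathlib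

open Finset

/-- The weighted sum-rate `R(p) = ∑_k ω_k log₂(1 + a_k p_k)`. -/
noncomputable def sumRate {K : ℕ} (ω a : Fin K → ℝ) (p : Fin K → ℝ) : ℝ :=
  ∑ k, ω k * Real.logb 2 (1 + a k * p k)

/-- Feasibility for problem (P1). -/
def FeasibleP1 {N K : ℕ} (b : Fin N → Fin K → ℝ) (E : Fin N → ℝ)
    (β : Fin N → Fin N → ℝ) (p : Fin K → ℝ) (e : Fin N → Fin N → ℝ) : Prop :=
  (∀ k, 0 ≤ p k) ∧ (∀ i j : Fin N, i ≠ j → 0 ≤ e i j) ∧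
    ∀ i, ∑ k, b i k * p k ≤
      E i + (∑ j, if j = i then 0 else β j i * e j i)
          - (∑ j, if j = i then 0 else e i j)

/-- The water-filling power allocation
`p_k(μ) = max (ω_k/(ln 2 · ∑_i b_{ik} μ_i) − 1/a_k) 0`. -/
noncomputable def waterfillPower {N K : ℕ} (a : Fin K → ℝ) (b : Fin N → Fin K → ℝ)
    (ω : Fin K → ℝ) (μ : Fin N → ℝ) (k : Fin K) : ℝ :=
  max (ω k / (Real.log 2 * ∑ i, b i k * μ i) - 1 / a k) 0

/-- Pointwise optimality of the water-filling level for the per-user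
Lagrangian term `x ↦ ω·log₂(1+ax) − c·x` over `x ≥ 0`. -/
lemma key_pointwise (ω a c p : ℝ) (hω : 0 < ω) (ha : 0 < a) (hc : 0 < c) (hp : 0 ≤ p) :
    ω * Real.logb 2 (1 + a * p) - c * p ≤
      ω * Real.logb 2 (1 + a * max (ω / (Real.log 2 * c) - 1 / a) 0)
        - c * max (ω / (Real.log 2 * c) - 1 / a) 0 := by
  set q := max (ω / (Real.log 2 * c) - 1 / a) 0 with hqdef
  have hq : 0 ≤ q := le_max_right _ _
  have hlog2 : (0:ℝ) < Real.log 2 := Real.log_pos (by norm_num)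
  have h1 : (0:ℝ) < 1 + a * p := by nlinarith
  have h2 : (0:ℝ) < 1 + a * q := by nlinarith
  have hdiff : Real.log (1 + a * p) - Real.log (1 + a * q) ≤ a * (p - q) / (1 + a * q) := by
    have h3 := Real.log_le_sub_one_of_pos (show (0:ℝ) < (1 + a * p) / (1 + a * q) by positivity)
    rw [Real.log_div h1.ne' h2.ne'] at h3
    have h4 : (1 + a * p) / (1 + a * q) - 1 = a * (p - q) / (1 + a * q) := by
      field_simp; ring
    linarith
  have main : ω * (Real.log (1 + a * p) - Real.log (1 + a * q)) ≤ Real.log 2 * (c * (p - q)) := by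
    have step1 : ω * (Real.log (1 + a * p) - Real.log (1 + a * q))
        ≤ ω * (a * (p - q) / (1 + a * q)) := mul_le_mul_of_nonneg_left hdiff hω.le
    rcases le_or_gt (ω / (Real.log 2 * c) - 1 / a) 0 with h | h
    · have hq0 : q = 0 := max_eq_right h
      have hac : ω * a ≤ Real.log 2 * c := by
        rw [sub_nonpos, div_le_div_iff₀ (by positivity) ha] at h; linarith
      rw [hq0] at step1 ⊢
      have : ω * (a * (p - 0) / (1 + a * 0)) = ω * a * p := by ring
      nlinarith
    · have hqe : q = ω / (Real.log 2 * c) - 1 / a := max_eq_left h.le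
      have heq : 1 + a * q = a * ω / (Real.log 2 * c) := by
        rw [hqe]; field_simp; ring
      have : ω * (a * (p - q) / (1 + a * q)) = Real.log 2 * (c * (p - q)) := by
        rw [heq]; field_simp
      linarith
  have hdivle : ω * (Real.log (1 + a * p) - Real.log (1 + a * q)) / Real.log 2 ≤ c * (p - q) := by
    rw [div_le_iff₀ hlog2]; linarith
  rw [Real.logb, Real.logb]
  have heq2 : ω * (Real.log (1 + a * p) / Real.log 2) - ω * (Real.log (1 + a * q) / Real.log 2)
      = ω * (Real.log (1 + a * p) - Real.log (1 + a * q)) / Real.log 2 := by ring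
  linarith

/-- The total weighted power cost of a feasible point is bounded by `∑ μᵢ Eᵢ`. -/
lemma power_cost_bound {N K : ℕ}
    (b : Fin N → Fin K → ℝ) (E : Fin N → ℝ) (β : Fin N → Fin N → ℝ)
    (p : Fin K → ℝ) (e : Fin N → Fin N → ℝ)
    (he : ∀ i j : Fin N, i ≠ j → 0 ≤ e i j)
    (hcons : ∀ i, ∑ k, b i k * p k ≤
      E i + (∑ j, if j = i then 0 else β j i * e j i)
          - (∑ j, if j = i then 0 else e i j))
    (μ : Fin N → ℝ)
    (hμ_nonneg : ∀ i, 0 ≤ μ i)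
    (hμ_feas : ∀ i j : Fin N, i ≠ j → β i j * μ j ≤ μ i) :
    ∑ k, (∑ i, b i k * μ i) * p k ≤ ∑ i, μ i * E i := by
  have hswap : ∑ k, (∑ i, b i k * μ i) * p k = ∑ i, μ i * ∑ k, b i k * p k := by
    simp_rw [Finset.sum_mul, Finset.mul_sum]
    rw [Finset.sum_comm]
    exact Finset.sum_congr rfl fun i _ => Finset.sum_congr rfl fun k _ => by ring
  rw [hswap]
  have step2 : ∑ i, μ i * ∑ k, b i k * p k ≤
      ∑ i, μ i * (E i + (∑ j, if j = i then 0 else β j i * e j i)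
        - (∑ j, if j = i then 0 else e i j)) :=
    Finset.sum_le_sum fun i _ => mul_le_mul_of_nonneg_left (hcons i) (hμ_nonneg i)
  have htransfer : ∑ i, μ i * (∑ j, if j = i then 0 else β j i * e j i)
      ≤ ∑ i, μ i * (∑ j, if j = i then 0 else e i j) := by
    have lhs_eq : ∑ i, μ i * (∑ j, if j = i then 0 else β j i * e j i)
        = ∑ j, ∑ i, if j = i then 0 else μ i * (β j i * e j i) := by
      simp_rw [Finset.mul_sum, mul_ite, mul_zero]
      exact Finset.sum_comm
    rw [lhs_eq]
    simp_rw [Finset.mul_sum, mul_ite, mul_zero]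
    refine Finset.sum_le_sum fun i _ => Finset.sum_le_sum fun j _ => ?_
    by_cases h : i = j
    · subst h; norm_num
    · rw [if_neg h, if_neg (Ne.symm h)]
      calc μ j * (β i j * e i j) = (β i j * μ j) * e i j := by ring
        _ ≤ μ i * e i j := mul_le_mul_of_nonneg_right (hμ_feas i j h) (he i j h)
  calc ∑ i, μ i * ∑ k, b i k * p k ≤ _ := step2
    _ = ∑ i, (μ i * E i + (μ i * (∑ j, if j = i then 0 else β j i * e j i)
        - μ i * (∑ j, if j = i then 0 else e i j))) :=
      Finset.sum_congr rfl fun i _ => by ring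
    _ = (∑ i, μ i * E i) + ((∑ i, μ i * (∑ j, if j = i then 0 else β j i * e j i))
        - ∑ i, μ i * (∑ j, if j = i then 0 else e i j)) := by
      rw [Finset.sum_add_distrib, Finset.sum_sub_distrib]
    _ ≤ ∑ i, μ i * E i := by linarith

/-- Weak duality for problem (P1): any feasible weighted sum-rate is bounded
above by the dual value at any dual-feasible `μ`. -/
theorem weak_duality {N K : ℕ}
    (a : Fin K → ℝ) (b : Fin N → Fin K → ℝ) (ω : Fin K → ℝ)
    (E : Fin N → ℝ) (β : Fin N → Fin N → ℝ)
    (hb : ∀ i k, 0 < b i k) (hω : ∀ k, 0 < ω k) (ha : ∀ k, 0 < a k)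
    (p : Fin K → ℝ) (e : Fin N → Fin N → ℝ)
    (hfeas : FeasibleP1 b E β p e)
    (μ : Fin N → ℝ)
    (hμ_nonneg : ∀ i, 0 ≤ μ i) (hμ_pos : ∃ i, 0 < μ i)
    (hμ_feas : ∀ i j : Fin N, i ≠ j → β i j * μ j ≤ μ i) :
    sumRate ω a p ≤
      (∑ k, (ω k * Real.logb 2 (1 + a k * waterfillPower a b ω μ k)
        - (∑ i, b i k * μ i) * waterfillPower a b ω μ k))
      + ∑ i, μ i * E i := by
  obtain ⟨hp, he, hcons⟩ := hfeas
  have hcpos : ∀ k, 0 < ∑ i, b i k * μ i := by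
    intro k
    obtain ⟨i0, hi0⟩ := hμ_pos
    exact Finset.sum_pos' (fun i _ => mul_nonneg (hb i k).le (hμ_nonneg i))
      ⟨i0, Finset.mem_univ _, mul_pos (hb i0 k) hi0⟩
  have hkey : ∀ k, ω k * Real.logb 2 (1 + a k * p k) - (∑ i, b i k * μ i) * p k ≤
      ω k * Real.logb 2 (1 + a k * waterfillPower a b ω μ k)
        - (∑ i, b i k * μ i) * waterfillPower a b ω μ k := by
    intro k
    unfold waterfillPower
    exact key_pointwise (ω k) (a k) _ (p k) (hω k) (ha k) (hcpos k) (hp k)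
  have hexpand : sumRate ω a p =
      (∑ k, (ω k * Real.logb 2 (1 + a k * p k) - (∑ i, b i k * μ i) * p k))
        + ∑ k, (∑ i, b i k * μ i) * p k := by
    unfold sumRate
    rw [← Finset.sum_add_distrib]
    exact Finset.sum_congr rfl fun k _ => by ring
  rw [hexpand]
  exact add_le_add (Finset.sum_le_sum fun k _ => hkey k)
    (power_cost_bound b E β p e he hcons μ hμ_nonneg hμ_feas)
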